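/- Let Q ∈ ℝ^{n×n} be a symmetric positive semidefinite matrix with non-negative entries, and let d = Q·1_n be the vector of expected degrees (assumed strictly positive). Then for any vector x ∈ ℝ^n, 2(x²)^T Q x² - (x²)^T diag(Q) x² ≥ ⟨d, x²⟩² / (Σ_i d_i), where x² denotes the entrywise square of x. -/

import Mathlib

open Matrix Finset

/-- Lower bound for the Poisson variance functional: for a symmetric PSD matrix `Q`
with nonnegative entries and positive expected degrees `d = Q 1`, and any `x`,
`2 (x²)ᵀ Q x² - (x²)ᵀ diag(Q) x² ≥ ⟨d, x²⟩² / (∑ i, d i)`. -/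
theorem variance_lower_bound
    {n : ℕ} (Q : Matrix (Fin n) (Fin n) ℝ)
    (hsymm : Q.IsSymm) (hpsd : Q.PosSemidef) (hnonneg : ∀ i j, 0 ≤ Q i j)
    (d : Fin n → ℝ) (hd : ∀ i, d i = ∑ j, Q i j) (hdpos : ∀ i, 0 < d i)
    (x : Fin n → ℝ) :
    ((fun i => (x i) ^ 2) ⬝ᵥ (d : Fin n → ℝ)) ^ 2 / (∑ i, d i) ≤
      2 * ((fun i => (x i) ^ 2) ⬝ᵥ Q *ᵥ (fun i => (x i) ^ 2)) -
        ((fun i => (x i) ^ 2) ⬝ᵥ (Matrix.diagonal fun i => Q i i) *ᵥ (fun i => (x i) ^ 2)) := by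
  set y : Fin n → ℝ := fun i => (x i) ^ 2 with hy
  have hynn : ∀ i, 0 ≤ y i := fun i => sq_nonneg _
  set S : ℝ := ∑ i, d i with hS
  set A : ℝ := ∑ i, ∑ j, Q i j * y i * y j with hA
  set B : ℝ := ∑ i, y i * d i with hB
  -- quadratic form equals A
  have hQA : y ⬝ᵥ Q *ᵥ y = A := by
    simp only [dotProduct, mulVec, hA, Finset.mul_sum]
    exact Finset.sum_congr rfl fun i _ => Finset.sum_congr rfl fun j _ => by ring
  -- diagonal term
  have hDiag : y ⬝ᵥ (Matrix.diagonal fun i => Q i i) *ᵥ y = ∑ i, Q i i * y i * y i := by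
    simp only [dotProduct, mulVec_diagonal]
    exact Finset.sum_congr rfl fun i _ => by ring
  have hDA : (∑ i, Q i i * y i * y i) ≤ A := by
    apply Finset.sum_le_sum
    intro i _
    exact Finset.single_le_sum (f := fun j => Q i j * y i * y j)
      (fun j _ => mul_nonneg (mul_nonneg (hnonneg i j) (hynn i)) (hynn j)) (Finset.mem_univ i)
  -- B as dot product
  have hBdot : y ⬝ᵥ d = B := rfl
  -- symmetry: column sums equal row sums
  have hcol : ∀ j, (∑ i, Q i j) = d j := by
    intro j
    rw [hd j]
    exact Finset.sum_congr rfl fun i _ => by rw [← hsymm.apply i j]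
  -- quadratic nonnegativity
  have hquad : ∀ t : ℝ, 0 ≤ S * (t * t) + (2 * B) * t + A := by
    intro t
    have h0 := hpsd.dotProduct_mulVec_nonneg (fun i => y i + t)
    simp only [star_trivial, dotProduct, mulVec] at h0
    have hexp : (∑ i, (y i + t) * ∑ j, Q i j * (y j + t))
        = S * (t * t) + (2 * B) * t + A := by
      have e1 : (∑ i, (y i + t) * ∑ j, Q i j * (y j + t))
          = ∑ i, ∑ j, (Q i j * y i * y j + Q i j * y i * t + Q i j * y j * t
              + Q i j * t * t) := by
        refine Finset.sum_congr rfl fun i _ => ?_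
        rw [Finset.mul_sum]
        exact Finset.sum_congr rfl fun j _ => by ring
      rw [e1]
      simp only [Finset.sum_add_distrib]
      have t1 : (∑ i, ∑ j, Q i j * y i * t) = B * t := by
        rw [hB, Finset.sum_mul]
        refine Finset.sum_congr rfl fun i _ => ?_
        rw [← Finset.sum_mul, ← Finset.sum_mul]
        rw [← hd i]; ring
      have t2 : (∑ i, ∑ j, Q i j * y j * t) = B * t := by
        rw [Finset.sum_comm]
        rw [hB, Finset.sum_mul]
        refine Finset.sum_congr rfl fun j _ => ?_
        rw [← Finset.sum_mul, ← Finset.sum_mul]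
        rw [← hcol j]; ring
      have t3 : (∑ i : Fin n, ∑ j : Fin n, Q i j * t * t) = S * (t * t) := by
        rw [hS, Finset.sum_mul]
        refine Finset.sum_congr rfl fun i _ => ?_
        rw [hd i, Finset.sum_mul]
        exact Finset.sum_congr rfl fun j _ => by ring
      rw [t1, t2, t3]; ring
    rw [hexp] at h0
    exact h0
  -- Cauchy–Schwarz via discriminant
  have hCS : B ^ 2 ≤ S * A := by
    have hdisc := discrim_le_zero hquad
    rw [discrim] at hdisc
    nlinarith [hdisc]
  have hSnn : 0 ≤ S := Finset.sum_nonneg fun i _ => (hdpos i).le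
  have hAnn : 0 ≤ A := by rw [← hQA]; simpa using hpsd.dotProduct_mulVec_nonneg y
  rw [hBdot, hQA, hDiag]
  rcases eq_or_lt_of_le hSnn with hS0 | hSpos
  · rw [← hS0, div_zero]
    nlinarith
  · rw [div_le_iff₀ hSpos]
    nlinarith
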